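/- Let α, β be real numbers with 0 < α/β < 1/9, and let m₁ < m₂ be as defined (the positive roots of the quadratic (4β³/α)μ² + C₁μ + 4/α² with C₁ = 27 − 18(β/α) − (β/α)²). Then for every μ with m₁ < μ < m₂, the cubic p_μ(λ) = αλ³ + λ² + βμλ + μ has three distinct real roots; and for every μ > 0 with μ < m₁ or μ > m₂, the cubic p_μ has exactly one real root and a pair of nonreal complex conjugate roots. -/

import Mathlib

open Polynomial

private lemma stmt2_pairsq (α : ℝ) (r w : ℂ) (hr : r.im = 0) :
    ((α : ℂ) * α * (r - w) * (r - star w) * (w - star w)) ^ 2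
      = ((-(α * α * Complex.normSq (r - w) * (2 * w.im)) ^ 2 : ℝ) : ℂ) := by
  have hcr : (starRingEnd ℂ) r = r := Complex.conj_eq_iff_im.mpr hr
  have h1 : (r - w) * (r - star w) = ((Complex.normSq (r - w) : ℝ) : ℂ) := by
    rw [← Complex.mul_conj (r - w), map_sub, hcr]
    rfl
  have h2 : w - star w = ((2 * w.im : ℝ) : ℂ) * Complex.I := Complex.sub_conj w
  calc ((α : ℂ) * α * (r - w) * (r - star w) * (w - star w)) ^ 2
      = ((α : ℂ) * α * ((r - w) * (r - star w))) ^ 2 * (w - star w) ^ 2 := by ring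
    _ = ((α : ℂ) * α * ((Complex.normSq (r - w) : ℝ) : ℂ)) ^ 2
          * (((2 * w.im : ℝ) : ℂ) * Complex.I) ^ 2 := by rw [h1, h2]
    _ = ((-(α * α * Complex.normSq (r - w) * (2 * w.im)) ^ 2 : ℝ) : ℂ) := by
        rw [mul_pow (((2 * w.im : ℝ)) : ℂ) Complex.I, Complex.I_sq]
        push_cast
        ring

private lemma stmt2_conj_aux (x y z : ℂ)
    (h : ({(starRingEnd ℂ) x, (starRingEnd ℂ) y, (starRingEnd ℂ) z} : Multiset ℂ) = {x, y, z})
    (hx : x.im ≠ 0) :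
    ∃ r w : ℂ, r.im = 0 ∧ w.im ≠ 0 ∧ ({x, y, z} : Multiset ℂ) = {r, w, star w} := by
  have hmem : (starRingEnd ℂ) x ∈ ({x, y, z} : Multiset ℂ) := by
    rw [← h]; simp
  have hne : (starRingEnd ℂ) x ≠ x := by
    intro e
    apply hx
    have := congrArg Complex.im e
    simp only [Complex.conj_im] at this
    linarith
  have hs := congrArg Multiset.sum h
  simp only [Multiset.insert_eq_cons, Multiset.sum_cons, Multiset.sum_singleton] at hs
  simp only [Multiset.insert_eq_cons, Multiset.mem_cons, Multiset.mem_singleton] at hmem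
  rcases hmem with h1 | h2 | h3
  · exact absurd h1 hne
  · have hyz : (starRingEnd ℂ) z = z := by
      have hxy : (starRingEnd ℂ) y = x := by rw [← h2]; simp
      rw [h2, hxy] at hs
      linear_combination hs
    refine ⟨z, x, ?_, hx, ?_⟩
    · have := congrArg Complex.im hyz; simp only [Complex.conj_im] at this; linarith
    · rw [show star x = y from h2.symm ▸ rfl]
      show x ::ₘ y ::ₘ z ::ₘ 0 = z ::ₘ x ::ₘ y ::ₘ 0
      rw [Multiset.cons_swap y z, Multiset.cons_swap x z]
  · have hyy : (starRingEnd ℂ) y = y := by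
      have hxz : (starRingEnd ℂ) z = x := by rw [← h3]; simp
      rw [h3, hxz] at hs
      linear_combination hs
    refine ⟨y, x, ?_, hx, ?_⟩
    · have := congrArg Complex.im hyy; simp only [Complex.conj_im] at this; linarith
    · rw [show star x = z from h3.symm ▸ rfl]
      show x ::ₘ y ::ₘ z ::ₘ 0 = y ::ₘ x ::ₘ z ::ₘ 0
      rw [Multiset.cons_swap x y]

private lemma stmt2_conj_cases (x y z : ℂ)
    (h : ({(starRingEnd ℂ) x, (starRingEnd ℂ) y, (starRingEnd ℂ) z} : Multiset ℂ) = {x, y, z}) :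
    (x.im = 0 ∧ y.im = 0 ∧ z.im = 0) ∨
      ∃ r w : ℂ, r.im = 0 ∧ w.im ≠ 0 ∧ ({x, y, z} : Multiset ℂ) = {r, w, star w} := by
  by_cases hx : x.im = 0
  · by_cases hy : y.im = 0
    · by_cases hz : z.im = 0
      · exact Or.inl ⟨hx, hy, hz⟩
      · right
        have hperm : ({z, x, y} : Multiset ℂ) = {x, y, z} := by
          show z ::ₘ x ::ₘ y ::ₘ 0 = x ::ₘ y ::ₘ z ::ₘ 0
          rw [Multiset.cons_swap z x, Multiset.cons_swap z y]
        have hperm' : ({(starRingEnd ℂ) z, (starRingEnd ℂ) x, (starRingEnd ℂ) y} : Multiset ℂ)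
            = {(starRingEnd ℂ) x, (starRingEnd ℂ) y, (starRingEnd ℂ) z} := by
          show _ ::ₘ _ ::ₘ _ ::ₘ 0 = _ ::ₘ _ ::ₘ _ ::ₘ 0
          rw [Multiset.cons_swap ((starRingEnd ℂ) z) ((starRingEnd ℂ) x),
            Multiset.cons_swap ((starRingEnd ℂ) z) ((starRingEnd ℂ) y)]
        obtain ⟨r, w, hr, hw, he⟩ := stmt2_conj_aux z x y (by rw [hperm', h, ← hperm]) hz
        exact ⟨r, w, hr, hw, by rw [← hperm, he]⟩
    · right
      have hperm : ({y, x, z} : Multiset ℂ) = {x, y, z} := by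
        show y ::ₘ x ::ₘ z ::ₘ 0 = x ::ₘ y ::ₘ z ::ₘ 0
        rw [Multiset.cons_swap y x]
      have hperm' : ({(starRingEnd ℂ) y, (starRingEnd ℂ) x, (starRingEnd ℂ) z} : Multiset ℂ)
          = {(starRingEnd ℂ) x, (starRingEnd ℂ) y, (starRingEnd ℂ) z} := by
        show _ ::ₘ _ ::ₘ _ ::ₘ 0 = _ ::ₘ _ ::ₘ _ ::ₘ 0
        rw [Multiset.cons_swap ((starRingEnd ℂ) y) ((starRingEnd ℂ) x)]
      obtain ⟨r, w, hr, hw, he⟩ := stmt2_conj_aux y x z (by rw [hperm', h, ← hperm]) hy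
      exact ⟨r, w, hr, hw, by rw [← hperm, he]⟩
  · exact Or.inr (stmt2_conj_aux x y z h hx)

private lemma stmt2_real_cast (x : ℂ) (h : x.im = 0) : ((x.re : ℝ) : ℂ) = x := by
  have := Complex.re_add_im x; rw [h] at this; simpa using this

private lemma stmt2_pos (α β μ : ℝ) (hα : 0 < α)
    (hpos : 0 < (⟨α, 1, β * μ, μ⟩ : Cubic ℝ).discr) :
    ∃ x y z : ℝ, x ≠ y ∧ x ≠ z ∧ y ≠ z ∧
      (C (α : ℂ) * X ^ 3 + X ^ 2 + C ((β : ℂ) * (μ : ℂ)) * X + C (μ : ℂ)).roots =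
        {(x : ℂ), (y : ℂ), (z : ℂ)} := by
  set P : Cubic ℝ := ⟨α, 1, β * μ, μ⟩ with hP
  have ha : P.a ≠ 0 := ne_of_gt hα
  set p : ℂ[X] := C (α : ℂ) * X ^ 3 + X ^ 2 + C ((β : ℂ) * (μ : ℂ)) * X + C (μ : ℂ) with hp
  have hPtp : (Cubic.map (algebraMap ℝ ℂ) P).toPoly = p := by
    simp [Cubic.map, Cubic.toPoly, hP, hp]
  obtain ⟨x, y, z, h3⟩ := (Cubic.splits_iff_roots_eq_three (φ := algebraMap ℝ ℂ) ha).mp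
    (IsAlgClosed.splits _)
  have hroots : p.roots = {x, y, z} := by rw [← hPtp]; exact h3
  have hmapconj : p.map (starRingEnd ℂ) = p := by
    simp [hp, Polynomial.map_add, Polynomial.map_mul, Polynomial.map_pow, map_C, map_X,
      Complex.conj_ofReal]
  have hconj : ({(starRingEnd ℂ) x, (starRingEnd ℂ) y, (starRingEnd ℂ) z} : Multiset ℂ)
      = {x, y, z} := by
    have h1 : (p.map (starRingEnd ℂ)).roots = p.roots.map (starRingEnd ℂ) :=
      (IsAlgClosed.splits p).roots_map _
    rw [hmapconj, hroots] at h1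
    simpa using h1.symm
  have hdc : ((P.discr : ℝ) : ℂ) = ((α : ℂ) * α * (x - y) * (x - z) * (y - z)) ^ 2 := by
    have := Cubic.discr_eq_prod_three_roots ha h3
    simpa [hP] using this
  rcases stmt2_conj_cases x y z hconj with ⟨hx, hy, hz⟩ | ⟨r, w, hr, hw, he⟩
  · have hx' := stmt2_real_cast x hx
    have hy' := stmt2_real_cast y hy
    have hz' := stmt2_real_cast z hz
    have hrdisc : P.discr = (α * α * (x.re - y.re) * (x.re - z.re) * (y.re - z.re)) ^ 2 := by
      apply Complex.ofReal_injective
      rw [hdc]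
      push_cast
      rw [hx', hy', hz']
    refine ⟨x.re, y.re, z.re, ?_, ?_, ?_, ?_⟩
    · intro e
      have h0 : P.discr = 0 := by rw [hrdisc, e]; ring
      linarith
    · intro e
      have h0 : P.discr = 0 := by rw [hrdisc, e]; ring
      linarith
    · intro e
      have h0 : P.discr = 0 := by rw [hrdisc, e]; ring
      linarith
    · rw [hroots, hx', hy', hz']
  · exfalso
    have h3' : (Cubic.map (algebraMap ℝ ℂ) P).roots = {r, w, star w} := h3.trans he
    have hdc2 : ((P.discr : ℝ) : ℂ)
        = ((α : ℂ) * α * (r - w) * (r - star w) * (w - star w)) ^ 2 := by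
      have := Cubic.discr_eq_prod_three_roots ha h3'
      simpa [hP] using this
    rw [stmt2_pairsq α r w hr] at hdc2
    have hd := Complex.ofReal_injective hdc2
    nlinarith [sq_nonneg (α * α * Complex.normSq (r - w) * (2 * w.im)), hpos, hd]

private lemma stmt2_neg (α β μ : ℝ) (hα : 0 < α)
    (hneg : (⟨α, 1, β * μ, μ⟩ : Cubic ℝ).discr < 0) :
    ∃ (x : ℝ) (z : ℂ), z.im ≠ 0 ∧
      (C (α : ℂ) * X ^ 3 + X ^ 2 + C ((β : ℂ) * (μ : ℂ)) * X + C (μ : ℂ)).roots =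
        {(x : ℂ), z, star z} := by
  set P : Cubic ℝ := ⟨α, 1, β * μ, μ⟩ with hP
  have ha : P.a ≠ 0 := ne_of_gt hα
  set p : ℂ[X] := C (α : ℂ) * X ^ 3 + X ^ 2 + C ((β : ℂ) * (μ : ℂ)) * X + C (μ : ℂ) with hp
  have hPtp : (Cubic.map (algebraMap ℝ ℂ) P).toPoly = p := by
    simp [Cubic.map, Cubic.toPoly, hP, hp]
  obtain ⟨x, y, z, h3⟩ := (Cubic.splits_iff_roots_eq_three (φ := algebraMap ℝ ℂ) ha).mp
    (IsAlgClosed.splits _)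
  have hroots : p.roots = {x, y, z} := by rw [← hPtp]; exact h3
  have hmapconj : p.map (starRingEnd ℂ) = p := by
    simp [hp, Polynomial.map_add, Polynomial.map_mul, Polynomial.map_pow, map_C, map_X,
      Complex.conj_ofReal]
  have hconj : ({(starRingEnd ℂ) x, (starRingEnd ℂ) y, (starRingEnd ℂ) z} : Multiset ℂ)
      = {x, y, z} := by
    have h1 : (p.map (starRingEnd ℂ)).roots = p.roots.map (starRingEnd ℂ) :=
      (IsAlgClosed.splits p).roots_map _
    rw [hmapconj, hroots] at h1
    simpa using h1.symm
  have hdc : ((P.discr : ℝ) : ℂ) = ((α : ℂ) * α * (x - y) * (x - z) * (y - z)) ^ 2 := by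
    have := Cubic.discr_eq_prod_three_roots ha h3
    simpa [hP] using this
  rcases stmt2_conj_cases x y z hconj with ⟨hx, hy, hz⟩ | ⟨r, w, hr, hw, he⟩
  · exfalso
    have hx' := stmt2_real_cast x hx
    have hy' := stmt2_real_cast y hy
    have hz' := stmt2_real_cast z hz
    have hrdisc : P.discr = (α * α * (x.re - y.re) * (x.re - z.re) * (y.re - z.re)) ^ 2 := by
      apply Complex.ofReal_injective
      rw [hdc]
      push_cast
      rw [hx', hy', hz']
    nlinarith [sq_nonneg (α * α * (x.re - y.re) * (x.re - z.re) * (y.re - z.re)), hneg, hrdisc]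
  · refine ⟨r.re, w, hw, ?_⟩
    rw [hroots, he, stmt2_real_cast r hr]

/-- For `0 < α/β < 1/9` (with `α, β > 0`), let `0 < m₁ < m₂` be the
positive roots of the quadratic `(4β³/α)μ² + C₁μ + 4/α²` with
`C₁ = 27 − 18(β/α) − (β/α)²`. Then for every `μ` with `m₁ < μ < m₂` the cubic
`αλ³ + λ² + βμλ + μ` has three distinct real roots, and for every `μ > 0` with
`μ < m₁` or `μ > m₂` it has exactly one real root and a pair of nonreal complex
conjugate roots. -/
theorem stmt_2 (α β : ℝ) (hα : 0 < α) (hβ : 0 < β) (h : α / β < 1 / 9)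
    (m₁ m₂ : ℝ) (hm₁pos : 0 < m₁) (hm₁₂ : m₁ < m₂)
    (hq₁ : (4 * β ^ 3 / α) * m₁ ^ 2 + (27 - 18 * (β / α) - (β / α) ^ 2) * m₁ + 4 / α ^ 2 = 0)
    (hq₂ : (4 * β ^ 3 / α) * m₂ ^ 2 + (27 - 18 * (β / α) - (β / α) ^ 2) * m₂ + 4 / α ^ 2 = 0) :
    (∀ μ : ℝ, m₁ < μ → μ < m₂ →
      ∃ x y z : ℝ, x ≠ y ∧ x ≠ z ∧ y ≠ z ∧
        (C (α : ℂ) * X ^ 3 + X ^ 2 + C ((β : ℂ) * (μ : ℂ)) * X + C (μ : ℂ)).roots =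
          {(x : ℂ), (y : ℂ), (z : ℂ)}) ∧
    (∀ μ : ℝ, 0 < μ → (μ < m₁ ∨ m₂ < μ) →
      ∃ (x : ℝ) (z : ℂ), z.im ≠ 0 ∧
        (C (α : ℂ) * X ^ 3 + X ^ 2 + C ((β : ℂ) * (μ : ℂ)) * X + C (μ : ℂ)).roots =
          {(x : ℂ), z, star z}) := by
  have hα' : α ≠ 0 := ne_of_gt hα
  have e₁ : 4 * β ^ 3 * α * m₁ ^ 2 + (27 * α ^ 2 - 18 * α * β - β ^ 2) * m₁ + 4 = 0 := by
    linear_combination (norm := (field_simp; ring)) α ^ 2 * hq₁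
  have e₂ : 4 * β ^ 3 * α * m₂ ^ 2 + (27 * α ^ 2 - 18 * α * β - β ^ 2) * m₂ + 4 = 0 := by
    linear_combination (norm := (field_simp; ring)) α ^ 2 * hq₂
  have h12 : m₁ - m₂ ≠ 0 := sub_ne_zero.mpr (ne_of_lt hm₁₂)
  have hC : 27 * α ^ 2 - 18 * α * β - β ^ 2 = -(4 * α * β ^ 3) * (m₁ + m₂) := by
    have h' : (27 * α ^ 2 - 18 * α * β - β ^ 2) * (m₁ - m₂)
        = (-(4 * α * β ^ 3) * (m₁ + m₂)) * (m₁ - m₂) := by linear_combination e₁ - e₂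
    exact mul_right_cancel₀ h12 h'
  have h4 : (4 : ℝ) = 4 * α * β ^ 3 * (m₁ * m₂) := by linear_combination e₁ - m₁ * hC
  have hdiscf : ∀ μ : ℝ, (⟨α, 1, β * μ, μ⟩ : Cubic ℝ).discr
      = -(4 * α * β ^ 3) * μ * (μ - m₁) * (μ - m₂) := by
    intro μ
    show (1 : ℝ) ^ 2 * (β * μ) ^ 2 - 4 * α * (β * μ) ^ 3 - 4 * 1 ^ 3 * μ - 27 * α ^ 2 * μ ^ 2 +
      18 * α * 1 * (β * μ) * μ = -(4 * α * β ^ 3) * μ * (μ - m₁) * (μ - m₂)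
    linear_combination (-μ ^ 2) * hC - μ * h4
  have h5 : 0 < 4 * α * β ^ 3 := by positivity
  constructor
  · intro μ h1 h2
    apply stmt2_pos α β μ hα
    rw [hdiscf]
    have hμ : 0 < μ := lt_trans hm₁pos h1
    have hg : -(4 * α * β ^ 3) * μ * (μ - m₁) * (μ - m₂)
        = (4 * α * β ^ 3) * μ * (μ - m₁) * (m₂ - μ) := by ring
    rw [hg]
    exact mul_pos (mul_pos (mul_pos h5 hμ) (sub_pos.2 h1)) (sub_pos.2 h2)
  · intro μ hμ hcase
    apply stmt2_neg α β μ hα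
    rw [hdiscf]
    rcases hcase with hc | hc
    · have hg : -(4 * α * β ^ 3) * μ * (μ - m₁) * (μ - m₂)
          = -((4 * α * β ^ 3) * μ * ((m₁ - μ) * (m₂ - μ))) := by ring
      rw [hg]
      exact neg_neg_iff_pos.mpr (mul_pos (mul_pos h5 hμ)
        (mul_pos (sub_pos.2 hc) (sub_pos.2 (lt_trans hc hm₁₂))))
    · have hg : -(4 * α * β ^ 3) * μ * (μ - m₁) * (μ - m₂)
          = -((4 * α * β ^ 3) * μ * ((μ - m₁) * (μ - m₂))) := by ring
      rw [hg]
      exact neg_neg_iff_pos.mpr (mul_pos (mul_pos h5 hμ)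
        (mul_pos (sub_pos.2 (lt_trans hm₁₂ hc)) (sub_pos.2 hc)))
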